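/- Let p be a fixed probability distribution on a finite set V and q = softmax(z). For any β ∈ (0,1), the gradient of JSD_β(p‖q) with respect to the logits z satisfies ‖∇_z JSD_β(p‖q)‖_∞ ≤ 1/4 + 2/√e, uniformly in p, q, and β; in particular the bound is strictly less than 2. -/

import Mathlib

open Finset

set_option maxHeartbeats 1000000

noncomputable def softmax {V : Type*} [Fintype V] (z : V → ℝ) (v : V) : ℝ :=
  Real.exp (z v) / ∑ w, Real.exp (z w)

private lemma log_le_div_exp_one {t : ℝ} (ht : 0 < t) : Real.log t ≤ t / Real.exp 1 := by
  have h := Real.add_one_le_exp (Real.log t - 1)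
  rw [Real.exp_sub, Real.exp_log ht] at h
  linarith

private lemma neg_inv_exp_le_mul_log {x : ℝ} (hx : 0 < x) :
    -(Real.exp 1)⁻¹ ≤ x * Real.log x := by
  have h1 : Real.log x⁻¹ ≤ x⁻¹ / Real.exp 1 := log_le_div_exp_one (inv_pos.mpr hx)
  have h2 : x * Real.log x⁻¹ ≤ (Real.exp 1)⁻¹ := by
    calc x * Real.log x⁻¹ ≤ x * (x⁻¹ / Real.exp 1) :=
          mul_le_mul_of_nonneg_left h1 hx.le
      _ = (Real.exp 1)⁻¹ := by
          rw [div_eq_mul_inv, ← mul_assoc, mul_inv_cancel₀ hx.ne', one_mul]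
  rw [Real.log_inv] at h2
  linarith

/-- The logit gradient of `JSD_β(p ‖ softmax z)` is uniformly bounded by
`1/4 + 2/√e < 2`, for every coordinate `i`, every fixed probability
distribution `p`, every logit vector `z`, and every `β ∈ (0,1)`. -/
theorem jsd_logit_gradient_bound
    {V : Type*} [Fintype V] [DecidableEq V] (p : V → ℝ) (z : V → ℝ) (β : ℝ) (i : V)
    (hp0 : ∀ v, 0 ≤ p v) (hp1 : ∑ v, p v = 1)
    (hβ : β ∈ Set.Ioo (0 : ℝ) 1) :
    (∀ d : ℝ,
      HasDerivAt
        (fun t : ℝ =>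
          β * ∑ v, p v * Real.log (p v /
              (β * p v + (1 - β) * softmax (Function.update z i t) v)) +
          (1 - β) * ∑ v, softmax (Function.update z i t) v *
              Real.log (softmax (Function.update z i t) v /
                (β * p v + (1 - β) * softmax (Function.update z i t) v)))
        d (z i) →
      |d| ≤ 1 / 4 + 2 / Real.sqrt (Real.exp 1)) ∧
    1 / 4 + 2 / Real.sqrt (Real.exp 1) < 2 := by
  obtain ⟨hβ0, hβ1⟩ := hβ
  have hu0 : (0:ℝ) < 1 - β := by linarith
  have hup : Function.update z i (z i) = z := Function.update_eq_self i z
  have hEpos : 0 < ∑ w, Real.exp (z w) :=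
    Finset.sum_pos (fun w _ => Real.exp_pos _) ⟨i, mem_univ i⟩
  have hqpos : ∀ v, 0 < softmax z v := fun v => div_pos (Real.exp_pos _) hEpos
  have hqsum : ∑ v, softmax z v = 1 := by
    simp only [softmax, ← Finset.sum_div]
    exact div_self hEpos.ne'
  have hqle1 : ∀ v, softmax z v ≤ 1 := by
    intro v
    rw [← hqsum]
    exact Finset.single_le_sum (fun w _ => (hqpos w).le) (mem_univ v)
  have hple1 : ∀ v, p v ≤ 1 := by
    intro v
    rw [← hp1]
    exact Finset.single_le_sum (fun w _ => hp0 w) (mem_univ v)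
  have hmpos : ∀ v, 0 < β * p v + (1 - β) * softmax z v := fun v =>
    add_pos_of_nonneg_of_pos (mul_nonneg hβ0.le (hp0 v)) (mul_pos hu0 (hqpos v))
  have hmle1 : ∀ v, β * p v + (1 - β) * softmax z v ≤ 1 := by
    intro v
    nlinarith [hple1 v, hqle1 v, hp0 v, (hqpos v).le]
  -- derivative of softmax coordinates
  have hnum : ∀ v, HasDerivAt (fun t => Real.exp (Function.update z i t v))
      (if v = i then Real.exp (z i) else 0) (z i) := by
    intro v
    rcases eq_or_ne v i with rfl | hv
    · simp only [Function.update_self, if_pos rfl, if_true]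
      exact Real.hasDerivAt_exp (z v)
    · simp only [Function.update_of_ne hv, if_neg hv]
      exact hasDerivAt_const _ _
  have hEder : HasDerivAt (fun t => ∑ w, Real.exp (Function.update z i t w))
      (Real.exp (z i)) (z i) := by
    have h := HasDerivAt.fun_sum (fun w (_ : w ∈ Finset.univ) => hnum w)
    simpa using h
  have hQ : ∀ v, HasDerivAt (fun t => softmax (Function.update z i t) v)
      (softmax z v * ((if v = i then 1 else 0) - softmax z i)) (z i) := by
    intro v
    have h := (hnum v).div hEder (by simp only [hup]; exact hEpos.ne')
    simp only [hup] at h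
    have heq : softmax z v * ((if v = i then 1 else 0) - softmax z i)
        = ((if v = i then Real.exp (z i) else 0) * (∑ w, Real.exp (z w))
            - Real.exp (z v) * Real.exp (z i)) / (∑ w, Real.exp (z w)) ^ 2 := by
      rcases eq_or_ne v i with rfl | hv
      · simp only [if_pos rfl, if_true, softmax]
        field_simp
      · simp only [if_neg hv, softmax]
        field_simp
        ring
    rw [heq]
    exact h
  -- abbreviation for the softmax derivative
  set q' : V → ℝ := fun v => softmax z v * ((if v = i then 1 else 0) - softmax z i)
    with hq'def
  have hm' : ∀ v, HasDerivAt
      (fun t => β * p v + (1 - β) * softmax (Function.update z i t) v)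
      ((1 - β) * q' v) (z i) := by
    intro v
    have h := (hasDerivAt_const (z i) (β * p v)).add ((hQ v).const_mul (1 - β))
    rw [zero_add] at h
    exact h
  -- the terms of the first sum
  have h1 : ∀ v, HasDerivAt
      (fun t => p v * Real.log (p v /
        (β * p v + (1 - β) * softmax (Function.update z i t) v)))
      (p v * (-((1 - β) * q' v) / (β * p v + (1 - β) * softmax z v))) (z i) := by
    intro v
    rcases eq_or_lt_of_le (hp0 v) with hpv | hpv
    · simp only [← hpv, zero_mul]
      exact hasDerivAt_const _ _
    · have hdiv := (hasDerivAt_const (z i) (p v)).div (hm' v)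
        (by simp only [hup]; exact (hmpos v).ne')
      simp only [hup] at hdiv
      have hlog := hdiv.log (by
        simp only [Pi.div_apply, hup]
        exact (div_pos hpv (hmpos v)).ne')
      simp only [Pi.div_apply, hup] at hlog
      have h := hlog.const_mul (p v)
      refine h.congr_deriv ?_
      have hmne := (hmpos v).ne'
      field_simp
      ring
  -- the terms of the second sum
  have h2 : ∀ v, HasDerivAt
      (fun t => softmax (Function.update z i t) v *
        Real.log (softmax (Function.update z i t) v /
          (β * p v + (1 - β) * softmax (Function.update z i t) v)))
      (q' v * Real.log (softmax z v / (β * p v + (1 - β) * softmax z v))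
        + (q' v - softmax z v * ((1 - β) * q' v)
            / (β * p v + (1 - β) * softmax z v))) (z i) := by
    intro v
    have hdiv := (hQ v).div (hm' v) (by simp only [hup]; exact (hmpos v).ne')
    simp only [hup] at hdiv
    have hlog := hdiv.log (by
      simp only [Pi.div_apply, hup]
      exact (div_pos (hqpos v) (hmpos v)).ne')
    simp only [Pi.div_apply, hup] at hlog
    have h := (hQ v).mul hlog
    simp only [hup] at h
    refine h.congr_deriv ?_
    have hmne := (hmpos v).ne'
    have hqne := (hqpos v).ne'
    have hq'v : softmax z v * ((if v = i then 1 else 0) - softmax z i) = q' v := rfl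
    rw [hq'v]
    generalize Real.log (softmax z v / (β * p v + (1 - β) * softmax z v)) = Lg
    generalize β * p v + (1 - β) * softmax z v = m at hmne ⊢
    field_simp
  -- full derivative
  have hF : HasDerivAt
      (fun t : ℝ =>
        β * ∑ v, p v * Real.log (p v /
            (β * p v + (1 - β) * softmax (Function.update z i t) v)) +
        (1 - β) * ∑ v, softmax (Function.update z i t) v *
            Real.log (softmax (Function.update z i t) v /
              (β * p v + (1 - β) * softmax (Function.update z i t) v)))
      (β * ∑ v, p v * (-((1 - β) * q' v) / (β * p v + (1 - β) * softmax z v))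
        + (1 - β) * ∑ v,
            (q' v * Real.log (softmax z v / (β * p v + (1 - β) * softmax z v))
              + (q' v - softmax z v * ((1 - β) * q' v)
                  / (β * p v + (1 - β) * softmax z v)))) (z i) := by
    exact ((HasDerivAt.fun_sum (fun v (_ : v ∈ Finset.univ) => h1 v)).const_mul β).add
      ((HasDerivAt.fun_sum (fun v (_ : v ∈ Finset.univ) => h2 v)).const_mul (1 - β))
  constructor
  · intro d hd
    have hdval := hd.unique hF
    -- simplify the derivative value
    have hstep : β * ∑ v, p v * (-((1 - β) * q' v) / (β * p v + (1 - β) * softmax z v))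
        + (1 - β) * ∑ v,
            (q' v * Real.log (softmax z v / (β * p v + (1 - β) * softmax z v))
              + (q' v - softmax z v * ((1 - β) * q' v)
                  / (β * p v + (1 - β) * softmax z v)))
        = (1 - β) * ∑ v, q' v *
            Real.log (softmax z v / (β * p v + (1 - β) * softmax z v)) := by
      rw [Finset.mul_sum, Finset.mul_sum, Finset.mul_sum, ← Finset.sum_add_distrib]
      refine Finset.sum_congr rfl fun v _ => ?_
      have hmne := (hmpos v).ne'
      field_simp
      ring
    -- abbreviations for the bound
    set L : ℝ := -Real.log (1 - β) with hL
    set K : ℝ := ∑ v, softmax z v *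
        Real.log (softmax z v / (β * p v + (1 - β) * softmax z v)) with hK
    have hS : ∑ v, q' v * Real.log (softmax z v / (β * p v + (1 - β) * softmax z v))
        = softmax z i * Real.log (softmax z i / (β * p i + (1 - β) * softmax z i))
          - softmax z i * K := by
      rw [hK, Finset.mul_sum]
      rw [show softmax z i * Real.log (softmax z i / (β * p i + (1 - β) * softmax z i))
          = ∑ v, (if v = i then softmax z v *
              Real.log (softmax z v / (β * p v + (1 - β) * softmax z v)) else 0) from by
        rw [Finset.sum_ite_eq' Finset.univ i]
        simp]
      rw [← Finset.sum_sub_distrib]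
      refine Finset.sum_congr rfl fun v _ => ?_
      rcases eq_or_ne v i with rfl | hv
      · simp only [hq'def]
        simp only [if_true]
        ring
      · simp only [hq'def]
        rw [if_neg hv, if_neg hv]
        ring
    -- bounds on the logs
    have hLnn : 0 ≤ L := by
      rw [hL]
      simp only [neg_nonneg]
      exact Real.log_nonpos (by linarith) (by linarith)
    have hlog_le : ∀ v, Real.log (softmax z v / (β * p v + (1 - β) * softmax z v)) ≤ L := by
      intro v
      have hdivle : softmax z v / (β * p v + (1 - β) * softmax z v) ≤ (1 - β)⁻¹ := by
        rw [div_le_iff₀ (hmpos v)]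
        have : (1 - β)⁻¹ * ((1 - β) * softmax z v) ≤ (1 - β)⁻¹ *
            (β * p v + (1 - β) * softmax z v) := by
          apply mul_le_mul_of_nonneg_left _ (inv_pos.mpr hu0).le
          nlinarith [mul_nonneg hβ0.le (hp0 v)]
        calc softmax z v = (1 - β)⁻¹ * ((1 - β) * softmax z v) := by
              field_simp
          _ ≤ (1 - β)⁻¹ * (β * p v + (1 - β) * softmax z v) := this
      calc Real.log (softmax z v / (β * p v + (1 - β) * softmax z v))
          ≤ Real.log ((1 - β)⁻¹) :=
            Real.log_le_log (div_pos (hqpos v) (hmpos v)) hdivle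
        _ = L := by rw [Real.log_inv, hL]
    have hK0 : 0 ≤ K := by
      have step : ∀ v, softmax z v - (β * p v + (1 - β) * softmax z v)
          ≤ softmax z v * Real.log (softmax z v / (β * p v + (1 - β) * softmax z v)) := by
        intro v
        have h := Real.log_le_sub_one_of_pos (div_pos (hmpos v) (hqpos v))
        have hrw : Real.log (softmax z v / (β * p v + (1 - β) * softmax z v))
            = -Real.log ((β * p v + (1 - β) * softmax z v) / softmax z v) := by
          rw [← Real.log_inv, inv_div]
        rw [hrw]
        have hqne := (hqpos v).ne'
        have h2 : (β * p v + (1 - β) * softmax z v) / softmax z v - 1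
            = ((β * p v + (1 - β) * softmax z v) - softmax z v) / softmax z v := by
          field_simp
        nlinarith [hqpos v, mul_le_mul_of_nonneg_left h (hqpos v).le,
          mul_div_cancel₀ ((β * p v + (1 - β) * softmax z v) - softmax z v) hqne]
      have hsum : ∑ v, (softmax z v - (β * p v + (1 - β) * softmax z v)) = 0 := by
        rw [Finset.sum_sub_distrib, Finset.sum_add_distrib, ← Finset.mul_sum,
          ← Finset.mul_sum, hp1, hqsum]
        ring
      calc (0:ℝ) = ∑ v, (softmax z v - (β * p v + (1 - β) * softmax z v)) := hsum.symm
        _ ≤ K := Finset.sum_le_sum fun v _ => step v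
    have hKle : K ≤ L := by
      calc K ≤ ∑ v, softmax z v * L :=
            Finset.sum_le_sum fun v _ =>
              mul_le_mul_of_nonneg_left (hlog_le v) (hqpos v).le
        _ = L := by rw [← Finset.sum_mul, hqsum, one_mul]
    have hA_le : softmax z i * Real.log (softmax z i / (β * p i + (1 - β) * softmax z i))
        ≤ L := by
      calc softmax z i * Real.log (softmax z i / (β * p i + (1 - β) * softmax z i))
          ≤ softmax z i * L :=
            mul_le_mul_of_nonneg_left (hlog_le i) (hqpos i).le
        _ ≤ 1 * L := mul_le_mul_of_nonneg_right (hqle1 i) hLnn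
        _ = L := one_mul L
    have hA_ge : -(Real.exp 1)⁻¹
        ≤ softmax z i * Real.log (softmax z i / (β * p i + (1 - β) * softmax z i)) := by
      have hqm : softmax z i ≤ softmax z i / (β * p i + (1 - β) * softmax z i) := by
        rw [le_div_iff₀ (hmpos i)]
        nlinarith [hqpos i, hmle1 i]
      have hloggele : Real.log (softmax z i)
          ≤ Real.log (softmax z i / (β * p i + (1 - β) * softmax z i)) :=
        Real.log_le_log (hqpos i) hqm
      calc -(Real.exp 1)⁻¹ ≤ softmax z i * Real.log (softmax z i) :=
            neg_inv_exp_le_mul_log (hqpos i)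
        _ ≤ softmax z i * Real.log (softmax z i / (β * p i + (1 - β) * softmax z i)) :=
            mul_le_mul_of_nonneg_left hloggele (hqpos i).le
    have hub : (1 - β) * L ≤ (Real.exp 1)⁻¹ := by
      have := neg_inv_exp_le_mul_log hu0
      rw [hL]
      nlinarith
    have hqiK0 : 0 ≤ softmax z i * K := mul_nonneg (hqpos i).le hK0
    have hqiKle : softmax z i * K ≤ L := by
      nlinarith [mul_nonneg (sub_nonneg.mpr (hqle1 i)) hK0]
    rw [hdval, hstep, hS]
    have hepos : (0:ℝ) < (Real.exp 1)⁻¹ := by positivity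
    set A : ℝ := softmax z i *
        Real.log (softmax z i / (β * p i + (1 - β) * softmax z i)) with hAdef
    set B : ℝ := softmax z i * K with hBdef
    clear_value A B
    clear_value K L
    have key : |(1 - β) * (A - B)| ≤ 2 * (Real.exp 1)⁻¹ := by
      rw [abs_le]
      constructor
      · nlinarith [mul_le_mul_of_nonneg_left hA_ge hu0.le,
          mul_le_mul_of_nonneg_left hqiKle hu0.le, hub, mul_pos hβ0 hepos]
      · nlinarith [mul_le_mul_of_nonneg_left hA_le hu0.le,
          mul_nonneg hu0.le hqiK0, hub, hepos]
    have hsqle : Real.sqrt (Real.exp 1) ≤ Real.exp 1 := by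
      have h2e : (2:ℝ) ≤ Real.exp 1 := by linarith [Real.add_one_le_exp 1]
      have h := Real.sqrt_le_sqrt (show Real.exp 1 ≤ (Real.exp 1) ^ 2 by nlinarith)
      rwa [Real.sqrt_sq (Real.exp_pos 1).le] at h
    have hsqpos : 0 < Real.sqrt (Real.exp 1) := Real.sqrt_pos.mpr (Real.exp_pos 1)
    have hfin : 2 * (Real.exp 1)⁻¹ ≤ 2 / Real.sqrt (Real.exp 1) := by
      rw [← div_eq_mul_inv]
      exact div_le_div_of_nonneg_left (by norm_num) hsqpos hsqle
    linarith [key]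
  · have h2e : (2:ℝ) ≤ Real.exp 1 := by linarith [Real.add_one_le_exp 1]
    have hs : (8/7:ℝ) < Real.sqrt (Real.exp 1) := by
      have h : ((8:ℝ)/7)^2 < Real.exp 1 := by nlinarith
      calc (8/7:ℝ) = Real.sqrt ((8/7)^2) := (Real.sqrt_sq (by norm_num)).symm
        _ < Real.sqrt (Real.exp 1) := Real.sqrt_lt_sqrt (by positivity) h
    have h1 : 2 / Real.sqrt (Real.exp 1) < 2 / (8/7) :=
      div_lt_div_of_pos_left (by norm_num) (by norm_num) hs
    have : (2:ℝ)/(8/7) = 7/4 := by norm_num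
    linarith
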